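/- Let A ∈ ℝ^{n×n} be symmetric positive-definite with smallest eigenvalue λ_min and largest eigenvalue λ_max, and let κ := λ_max/λ_min. Let M_0 ∈ ℝ^{n×n}, R_0 := I_n − A M_0, G_0 := −A R_0. Then for every i ≥ 0, the minimum of ‖A⁻¹ − M‖_{F,A} over M ∈ M_0 + K_i(A², G_0) is at most 2·((κ−1)/(κ+1))^i · ‖A⁻¹ − M_0‖_{F,A}. -/

import Mathlib

open Matrix

/-- Frobenius inner product `(X,Y)_F = trace (Xᵀ Y)`. -/
noncomputable def finner {n : ℕ} (X Y : Matrix (Fin n) (Fin n) ℝ) : ℝ :=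
  (Xᵀ * Y).trace

/-- Frobenius norm `‖X‖_F`. -/
noncomputable def fnorm {n : ℕ} (X : Matrix (Fin n) (Fin n) ℝ) : ℝ :=
  Real.sqrt (finner X X)

/-- A-weighted Frobenius inner product `(X,Y)_{F,A} = trace (Xᵀ A Y)`. -/
noncomputable def finnerA {n : ℕ} (A X Y : Matrix (Fin n) (Fin n) ℝ) : ℝ :=
  (Xᵀ * A * Y).trace

/-- A-weighted Frobenius norm `‖X‖_{F,A}`. -/
noncomputable def fnormA {n : ℕ} (A X : Matrix (Fin n) (Fin n) ℝ) : ℝ :=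
  Real.sqrt (finnerA A X X)

/-- Krylov subspace `K_i(B, X) = span {X, BX, …, B^(i-1) X}`. -/
noncomputable def krylov {n : ℕ} (i : ℕ) (B X : Matrix (Fin n) (Fin n) ℝ) :
    Submodule ℝ (Matrix (Fin n) (Fin n) ℝ) :=
  Submodule.span ℝ {Y | ∃ j < i, Y = B ^ j * X}

open Polynomial

section Helpers
variable {n : ℕ}


lemma aeval_diagonal (p : ℝ[X]) (d : Fin n → ℝ) :
    aeval (Matrix.diagonal d) p = Matrix.diagonal (fun k => p.eval (d k)) := by
  induction p using Polynomial.induction_on' with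
  | add p q hp hq => simp [map_add, hp, hq, Matrix.diagonal_add]
  | monomial m a =>
      simp only [aeval_monomial, Matrix.diagonal_pow, eval_monomial]
      rw [Matrix.algebraMap_eq_diagonal, Matrix.diagonal_mul_diagonal]
      refine congrArg Matrix.diagonal (funext fun k => ?_)
      simp [Pi.algebraMap_apply, Pi.pow_apply]

lemma aeval_conj (U D : Matrix (Fin n) (Fin n) ℝ) (hU : U * star U = 1) (hU' : star U * U = 1)
    (p : ℝ[X]) : aeval (U * D * star U) p = U * aeval D p * star U := by
  let φ : Matrix (Fin n) (Fin n) ℝ →ₐ[ℝ] Matrix (Fin n) (Fin n) ℝ :=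
    { toFun := fun M => U * M * star U
      map_one' := by simpa using hU
      map_mul' := fun X Y => by
        have h : star U * (U * (Y * star U)) = Y * star U := by
          rw [← mul_assoc, hU', one_mul]
        simp only [mul_assoc, h]
      map_zero' := by simp
      map_add' := fun X Y => by noncomm_ring
      commutes' := fun r => by
        simp only [Algebra.algebraMap_eq_smul_one]
        rw [mul_smul_comm, mul_one, smul_mul_assoc, hU] }
  have := Polynomial.aeval_algHom_apply φ D p
  simpa [φ] using this

lemma trace_nonneg_of_posSemidef {S : Matrix (Fin n) (Fin n) ℝ} (hS : S.PosSemidef) :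
    0 ≤ S.trace := by
  rw [Matrix.trace]
  refine Finset.sum_nonneg fun k _ => ?_
  exact hS.diag_nonneg



lemma T_real_cosh (t : ℝ) (m : ℤ) :
    (Polynomial.Chebyshev.T ℝ m).eval (Real.cosh t) = Real.cosh (m * t) := by
  have hc : ((Polynomial.Chebyshev.T ℂ m).eval (Complex.cosh (t : ℂ))) = Complex.cosh (m * t) := by
    rw [← Complex.cos_mul_I, Polynomial.Chebyshev.T_complex_cos, ← Complex.cos_mul_I]
    ring_nf
  have := Polynomial.Chebyshev.complex_ofReal_eval_T (Real.cosh t) m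
  rw [Complex.ofReal_cosh, hc] at this
  have h2 : ((Real.cosh (m*t) : ℝ) : ℂ) = Complex.cosh ((m:ℂ) * (t:ℂ)) := by
    rw [Complex.ofReal_cosh]; push_cast; ring_nf
  rw [← h2] at this
  exact_mod_cast this

lemma natDegree_T_le : ∀ i : ℕ, (Polynomial.Chebyshev.T ℝ (i : ℤ)).natDegree ≤ i := by
  intro i
  induction i using Nat.strong_induction_on with
  | _ i ih =>
    match i with
    | 0 => simp [Polynomial.Chebyshev.T_zero]
    | 1 => simp [Polynomial.Chebyshev.T_one]
    | (i+2) =>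
      have h : (Polynomial.Chebyshev.T ℝ ((i:ℤ) + 2)) =
          2 * X * Polynomial.Chebyshev.T ℝ ((i:ℤ)+1) - Polynomial.Chebyshev.T ℝ (i:ℤ) :=
        Polynomial.Chebyshev.T_add_two ℝ i
      have h2 : ((i+2 : ℕ) : ℤ) = (i : ℤ) + 2 := by push_cast; ring
      rw [h2, h]
      refine (natDegree_sub_le _ _).trans (max_le ?_ ?_)
      · refine (natDegree_mul_le).trans ?_
        have := ih (i+1) (by omega)
        have h1 : ((i+1 : ℕ) : ℤ) = (i : ℤ) + 1 := by push_cast; ring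
        rw [h1] at this
        calc (2 * X : ℝ[X]).natDegree + (Polynomial.Chebyshev.T ℝ ((i:ℤ)+1)).natDegree
            ≤ 1 + (i+1) := by
              gcongr
              · exact (natDegree_mul_le).trans (by simp)
          _ = i + 2 := by ring
      · exact (ih i (by omega)).trans (by omega)

lemma cheb_poly_bound (i : ℕ) (hi : 1 ≤ i) (a b : ℝ) (ha : 0 < a) (hab : a ≤ b) :
    ∃ r : ℝ[X], r.eval 0 = 1 ∧ r.natDegree ≤ i ∧
      ∀ x ∈ Set.Icc (a^2) (b^2), |r.eval x| ≤ 2 * ((b/a - 1)/(b/a + 1))^i := by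
  rcases eq_or_lt_of_le hab with h | h
  · -- a = b
    refine ⟨1 - Polynomial.C (a^2)⁻¹ * X, by simp, ?_, ?_⟩
    · refine (natDegree_sub_le _ _).trans (max_le (by simp) ?_)
      exact le_trans (natDegree_C_mul_le _ _) (by simpa using hi)
    · intro x hx
      subst h
      have hx' : x = a^2 := le_antisymm hx.2 hx.1
      have h1 : a / a = 1 := div_self ha.ne'
      have h2 : eval x (1 - Polynomial.C (a^2)⁻¹ * X) = 0 := by
        simp [hx']
        field_simp
        norm_num
      rw [h2, h1]
      simp [zero_pow (by omega : i ≠ 0)]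
  · -- a < b
    set κ := b / a with hκ
    have hκ1 : 1 < κ := (one_lt_div ha).mpr h
    have ha2 : (0:ℝ) < a^2 := by positivity
    have hba : (0:ℝ) < b^2 - a^2 := by nlinarith
    set u : ℝ := (b^2+a^2)/(b^2-a^2) with hu
    set v : ℝ := 2/(b^2-a^2) with hv
    have hv0 : 0 < v := by positivity
    set z : ℝ := (κ+1)/(κ-1) with hz
    have hz0 : 0 < z := by
      apply div_pos <;> linarith
    have hκ21 : κ^2 - 1 ≠ 0 := by nlinarith
    have hucosh : Real.cosh (Real.log z) = u := by
      rw [Real.cosh_log hz0, hz, hu, hκ]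
      have h1 : κ - 1 ≠ 0 := by intro hh; rw [hκ] at hh; nlinarith [(one_lt_div ha).mpr h]
      have h2 : κ + 1 ≠ 0 := by nlinarith
      rw [hκ] at h1 h2
      have hba1 : b - a ≠ 0 := by intro hh; nlinarith
      have hba2 : b + a ≠ 0 := by intro hh; nlinarith
      field_simp
      ring
    set tval : ℝ := (Polynomial.Chebyshev.T ℝ (i:ℤ)).eval u with htval
    have htv : tval = Real.cosh ((i:ℝ) * Real.log z) := by
      rw [htval, ← hucosh, T_real_cosh]
      push_cast; ring_nf
    have htv_ge : z^i / 2 ≤ tval := by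
      rw [htv, Real.cosh_eq]
      have : Real.exp ((i:ℝ) * Real.log z) = z ^ i := by
        rw [Real.exp_nat_mul, Real.exp_log hz0]
      rw [this]
      have := Real.exp_pos (-((i:ℝ) * Real.log z))
      linarith
    have hzpow : 0 < z^i := by positivity
    have htv0 : 0 < tval := lt_of_lt_of_le (by linarith) htv_ge
    have hinv : tval⁻¹ ≤ 2 * ((κ-1)/(κ+1))^i := by
      have hzinv : (κ-1)/(κ+1) = z⁻¹ := by
        rw [hz, inv_div]
      rw [hzinv]
      calc tval⁻¹ ≤ (z^i/2)⁻¹ := by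
            apply inv_anti₀ (by linarith) htv_ge
        _ = 2 * (z^i)⁻¹ := by field_simp
        _ = 2 * (z⁻¹)^i := by rw [inv_pow]
    refine ⟨Polynomial.C tval⁻¹ *
      ((Polynomial.Chebyshev.T ℝ (i:ℤ)).comp (Polynomial.C u - Polynomial.C v * X)), ?_, ?_, ?_⟩
    · simp only [eval_mul, eval_C, eval_comp, eval_sub, eval_mul, eval_X, mul_zero, sub_zero]
      rw [← htval]
      field_simp
    · refine (natDegree_C_mul_le _ _).trans ?_
      refine (natDegree_comp_le).trans ?_
      have h1 : (Polynomial.C u - Polynomial.C v * X : ℝ[X]).natDegree ≤ 1 := by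
        refine (natDegree_sub_le _ _).trans (max_le (by simp) ?_)
        exact (natDegree_C_mul_le _ _).trans (by simp)
      calc (Polynomial.Chebyshev.T ℝ (i:ℤ)).natDegree *
            (Polynomial.C u - Polynomial.C v * X : ℝ[X]).natDegree
          ≤ i * 1 := Nat.mul_le_mul (natDegree_T_le i) h1
        _ = i := by ring
    · intro x hx
      set y : ℝ := u - v * x with hy
      have hy1 : y ≤ 1 := by
        have hva : v * a^2 = u - 1 := by rw [hv, hu]; field_simp; ring
        have : v * a^2 ≤ v * x := by
          apply mul_le_mul_of_nonneg_left hx.1 (le_of_lt hv0)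
        rw [hva] at this
        rw [hy]; linarith
      have hy2 : -1 ≤ y := by
        have hvb : v * b^2 = u + 1 := by rw [hv, hu]; field_simp; ring
        have : v * x ≤ v * b^2 := by
          apply mul_le_mul_of_nonneg_left hx.2 (le_of_lt hv0)
        rw [hvb] at this
        rw [hy]; linarith
      have hcos : Real.cos (Real.arccos y) = y := Real.cos_arccos hy2 hy1
      have hTy : (Polynomial.Chebyshev.T ℝ (i:ℤ)).eval y = Real.cos (((i:ℤ):ℝ) * Real.arccos y) := by
        have h3 := Polynomial.Chebyshev.T_real_cos (Real.arccos y) (i:ℤ)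
        rw [hcos] at h3
        exact h3
      have hev : eval x (Polynomial.C tval⁻¹ *
          ((Polynomial.Chebyshev.T ℝ (i:ℤ)).comp (Polynomial.C u - Polynomial.C v * X)))
          = tval⁻¹ * (Polynomial.Chebyshev.T ℝ (i:ℤ)).eval y := by
        rw [eval_mul, eval_C, eval_comp]
        simp [hy]
      rw [hev, abs_mul, hTy]
      calc |tval⁻¹| * |Real.cos (((i:ℤ):ℝ) * Real.arccos y)|
          ≤ tval⁻¹ * 1 := by
            apply mul_le_mul (le_of_eq (abs_of_pos (by positivity)))
              (Real.abs_cos_le_one _) (abs_nonneg _) (le_of_lt (by positivity))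
        _ = tval⁻¹ := mul_one _
        _ ≤ 2 * ((κ-1)/(κ+1))^i := hinv
        _ = 2 * ((b/a-1)/(b/a+1))^i := by rw [hκ]

end Helpers

/-- Convergence bound for NCG iterates: the best A-weighted Frobenius error over
the affine Krylov subspace of A² decays at least like 2 ((κ−1)/(κ+1))^i. -/
theorem ncg_error_bound {n : ℕ} (hn : 0 < n)
    (A M₀ : Matrix (Fin n) (Fin n) ℝ) (hA : A.PosDef)
    (R₀ G₀ : Matrix (Fin n) (Fin n) ℝ)
    (hR₀ : R₀ = 1 - A * M₀) (hG₀ : G₀ = -(A * R₀))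
    (κ : ℝ) (hκ : κ = (⨆ k, hA.1.eigenvalues k) / (⨅ k, hA.1.eigenvalues k)) :
    ∀ i : ℕ, ∃ M : Matrix (Fin n) (Fin n) ℝ,
      (∃ V ∈ krylov i (A ^ 2) G₀, M = M₀ + V) ∧
      fnormA A (A⁻¹ - M) ≤ 2 * ((κ - 1) / (κ + 1)) ^ i * fnormA A (A⁻¹ - M₀) := by
  intro i
  haveI : Nonempty (Fin n) := ⟨⟨0, hn⟩⟩
  set lam : Fin n → ℝ := hA.1.eigenvalues with hlam
  set a : ℝ := ⨅ k, lam k with haa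
  set b : ℝ := ⨆ k, lam k with hbb
  obtain ⟨k₀, hk₀⟩ := exists_eq_ciInf_of_finite (f := lam)
  have ha : 0 < a := by rw [haa, ← hk₀]; exact hA.eigenvalues_pos k₀
  have hlam_lb : ∀ k, a ≤ lam k := fun k => ciInf_le (Set.Finite.bddBelow (Set.finite_range lam)) k
  have hlam_ub : ∀ k, lam k ≤ b := fun k => le_ciSup (Set.Finite.bddAbove (Set.finite_range lam)) k
  have hab : a ≤ b := le_trans (hlam_lb k₀) (hlam_ub k₀)
  have hκab : κ = b / a := hκ
  -- case i = 0
  rcases Nat.eq_zero_or_pos i with hi0 | hi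
  · refine ⟨M₀, ⟨0, Submodule.zero_mem _, by rw [add_zero]⟩, ?_⟩
    rw [hi0, pow_zero, mul_one]
    have h0 : 0 ≤ fnormA A (A⁻¹ - M₀) := Real.sqrt_nonneg _
    linarith
  -- main case
  obtain ⟨r, hr0, hrdeg, hrbound⟩ := cheb_poly_bound i hi a b ha hab
  set c : ℝ := 2 * ((κ - 1) / (κ + 1)) ^ i with hc
  have hκ1 : 1 ≤ κ := by
    rw [hκab]; exact (one_le_div ha).mpr hab
  have hc0 : 0 ≤ c := by
    rw [hc]
    have : 0 ≤ (κ - 1) / (κ + 1) := div_nonneg (by linarith) (by linarith)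
    positivity
  have hrbound' : ∀ x ∈ Set.Icc (a^2) (b^2), |r.eval x| ≤ c := by
    rw [hc, hκab]; exact hrbound
  -- polynomial w
  set w : ℝ[X] := (r - 1).divX with hw
  have hr1 : r = 1 + X * w := by
    have h1 := X_mul_divX_add (r - 1)
    have h2 : (r - 1).coeff 0 = 0 := by
      rw [coeff_sub, coeff_zero_eq_eval_zero, hr0]; simp
    rw [h2, map_zero, add_zero] at h1
    rw [← hw] at h1
    rw [h1]; ring
  have hwdeg : w.natDegree < i := by
    have h1 : w.natDegree = (r - 1).natDegree - 1 := natDegree_divX_eq_natDegree_tsub_one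
    have h2 : (r - 1).natDegree ≤ i :=
      (natDegree_sub_le _ _).trans (max_le hrdeg (by simpa using hi))
    omega
  -- matrix setup
  have hdet : IsUnit A.det := hA.det_pos.ne'.isUnit
  have hAinv : A * A⁻¹ = 1 := Matrix.mul_nonsing_inv A hdet
  set E₀ : Matrix (Fin n) (Fin n) ℝ := A⁻¹ - M₀ with hE₀
  have key : A * A * (A⁻¹ - M₀) = A * (1 - A * M₀) := by
    rw [mul_sub, mul_sub, mul_one, mul_assoc, hAinv, mul_one, mul_assoc]
  have hG : G₀ = -(A ^ 2 * E₀) := by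
    rw [hG₀, hR₀, hE₀, pow_two, key]
  set V : Matrix (Fin n) (Fin n) ℝ := (aeval (A ^ 2) w) * G₀ with hV
  refine ⟨M₀ + V, ⟨V, ?_, rfl⟩, ?_⟩
  · -- membership
    rw [hV, aeval_eq_sum_range' hwdeg, Finset.sum_mul]
    refine Submodule.sum_mem _ fun j hj => ?_
    rw [smul_mul_assoc]
    exact Submodule.smul_mem _ _ (Submodule.subset_span ⟨j, Finset.mem_range.mp hj, rfl⟩)
  -- error formula
  have hE : A⁻¹ - (M₀ + V) = (aeval (A ^ 2) r) * E₀ := by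
    have hcomm : (aeval (A ^ 2) w) * A ^ 2 = A ^ 2 * (aeval (A ^ 2) w) := by
      have h1 : aeval (A ^ 2) (w * X) = aeval (A ^ 2) (X * w) := by rw [mul_comm]
      simpa only [_root_.map_mul, aeval_X] using h1
    have h2 : aeval (A ^ 2) r = 1 + A ^ 2 * aeval (A ^ 2) w := by
      rw [hr1, _root_.map_add, _root_.map_one, _root_.map_mul, aeval_X]
    rw [h2, add_mul, one_mul, hV, hG, mul_neg, hE₀]
    have h3 : aeval (A ^ 2) w * (A ^ 2 * (A⁻¹ - M₀)) = A ^ 2 * (aeval (A ^ 2) w) * (A⁻¹ - M₀) := by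
      rw [← mul_assoc, hcomm]
    rw [h3]; noncomm_ring
  -- spectral decomposition
  set U : Matrix (Fin n) (Fin n) ℝ := (hA.1.eigenvectorUnitary : Matrix (Fin n) (Fin n) ℝ)
    with hUdef
  have hU : U * star U = 1 := Matrix.mem_unitaryGroup_iff.mp hA.1.eigenvectorUnitary.2
  have hU' : star U * U = 1 := Matrix.mem_unitaryGroup_iff'.mp hA.1.eigenvectorUnitary.2
  have hspec : A = U * Matrix.diagonal lam * star U := by
    have h := hA.1.spectral_theorem
    rw [RCLike.ofReal_real_eq_id] at h
    simpa using h
  have sandwich : ∀ X Y : Matrix (Fin n) (Fin n) ℝ,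
      (U * X * star U) * (U * Y * star U) = U * (X * Y) * star U := by
    intro X Y
    have h1 : star U * (U * Y * star U) = Y * star U := by
      rw [← mul_assoc, ← mul_assoc, hU', one_mul]
    calc (U * X * star U) * (U * Y * star U)
        = U * X * (star U * (U * Y * star U)) := by rw [mul_assoc]
      _ = U * X * (Y * star U) := by rw [h1]
      _ = U * (X * Y) * star U := by rw [← mul_assoc, mul_assoc U X Y]
  set g : Fin n → ℝ := fun k => r.eval (lam k ^ 2) with hg
  have hA2 : A ^ 2 = U * Matrix.diagonal (fun k => lam k ^ 2) * star U := by
    rw [pow_two]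
    nth_rewrite 1 [hspec]
    nth_rewrite 1 [hspec]
    rw [sandwich, Matrix.diagonal_mul_diagonal]
    have h1 : (fun i => lam i * lam i) = fun k => lam k ^ 2 := by
      funext k; rw [pow_two]
    rw [h1]
  have hRm : aeval (A ^ 2) r = U * Matrix.diagonal g * star U := by
    rw [hA2, aeval_conj U _ hU hU', aeval_diagonal]
  set Rm := aeval (A ^ 2) r with hRmdef
  have hdiagsym : ∀ d : Fin n → ℝ, star (Matrix.diagonal d) = Matrix.diagonal d := by
    intro d
    rw [Matrix.star_eq_conjTranspose, Matrix.diagonal_conjTranspose]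
    congr
  have hRmsym : star Rm = Rm := by
    rw [hRm, StarMul.star_mul, StarMul.star_mul, star_star, hdiagsym, mul_assoc]
  have hstar_eq : ∀ X : Matrix (Fin n) (Fin n) ℝ, star X = Xᵀ := by
    intro X
    rw [Matrix.star_eq_conjTranspose, Matrix.conjTranspose_eq_transpose_of_trivial]
  -- the PSD correction matrix
  set pd : Fin n → ℝ := fun k => lam k * (c ^ 2 - g k ^ 2) with hpd
  have hpd0 : ∀ k, 0 ≤ pd k := by
    intro k
    have hlk : 0 < lam k := lt_of_lt_of_le ha (hlam_lb k)
    have hmem : lam k ^ 2 ∈ Set.Icc (a ^ 2) (b ^ 2) :=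
      ⟨pow_le_pow_left₀ ha.le (hlam_lb k) 2,
       pow_le_pow_left₀ hlk.le (hlam_ub k) 2⟩
    have habs := hrbound' _ hmem
    have hg2 : g k ^ 2 ≤ c ^ 2 := by
      have := pow_le_pow_left₀ (abs_nonneg (r.eval (lam k ^ 2))) habs 2
      rwa [sq_abs] at this
    exact mul_nonneg hlk.le (by linarith)
  have hPSD : (U * Matrix.diagonal pd * star U).PosSemidef := by
    have h1 : (Matrix.diagonal pd).PosSemidef := Matrix.PosSemidef.diagonal (fun k => hpd0 k)
    have h2 := h1.mul_mul_conjTranspose_same U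
    rwa [← Matrix.star_eq_conjTranspose] at h2
  -- key matrix identity
  have hRAR : Rm * A * Rm = U * Matrix.diagonal (fun k => g k * lam k * g k) * star U := by
    rw [hRm]
    nth_rewrite 1 [hspec]
    rw [sandwich, sandwich, Matrix.diagonal_mul_diagonal, Matrix.diagonal_mul_diagonal]
  have hcA : c ^ 2 • A = U * Matrix.diagonal (fun k => c ^ 2 * lam k) * star U := by
    nth_rewrite 1 [hspec]
    have h1 : (fun k => c ^ 2 * lam k) = c ^ 2 • lam := by funext k; simp
    rw [h1, Matrix.diagonal_smul, mul_smul_comm, smul_mul_assoc]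
  have hkey : c ^ 2 • (E₀ᵀ * A * E₀) - ((Rm * E₀)ᵀ * A * (Rm * E₀))
      = E₀ᵀ * (U * Matrix.diagonal pd * star U) * E₀ := by
    have hT : (Rm * E₀)ᵀ = E₀ᵀ * Rm := by
      rw [Matrix.transpose_mul, ← hstar_eq Rm, hRmsym]
    rw [hT]
    have hassoc : E₀ᵀ * Rm * A * (Rm * E₀) = E₀ᵀ * (Rm * A * Rm) * E₀ := by
      simp only [mul_assoc]
    rw [hassoc, hRAR]
    have hsm : c ^ 2 • (E₀ᵀ * A * E₀) = E₀ᵀ * (c ^ 2 • A) * E₀ := by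
      rw [mul_smul_comm, smul_mul_assoc]
    have hdd : U * Matrix.diagonal (fun k => c ^ 2 * lam k) * star U
        - U * Matrix.diagonal (fun k => g k * lam k * g k) * star U
        = U * Matrix.diagonal pd * star U := by
      rw [← sub_mul, ← mul_sub, Matrix.diagonal_sub]
      have h1 : (fun i => c ^ 2 * lam i - g i * lam i * g i) = pd := by
        funext k
        simp only [hpd]
        ring
      rw [h1]
    rw [hsm, hcA, ← sub_mul, ← mul_sub, hdd]
  -- trace inequality
  have hEY := hE
  have htr0 : 0 ≤ (E₀ᵀ * (U * Matrix.diagonal pd * star U) * E₀).trace := by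
    have h1 := hPSD.conjTranspose_mul_mul_same E₀
    have h2 : E₀ᴴ = E₀ᵀ := by rw [← Matrix.star_eq_conjTranspose, hstar_eq]
    rw [h2] at h1
    exact trace_nonneg_of_posSemidef h1
  have htr : ((Rm * E₀)ᵀ * A * (Rm * E₀)).trace ≤ c ^ 2 * (E₀ᵀ * A * E₀).trace := by
    have h1 := congrArg Matrix.trace hkey
    rw [Matrix.trace_sub, Matrix.trace_smul, smul_eq_mul] at h1
    linarith
  -- conclude
  have hfin : finnerA A (A⁻¹ - (M₀ + V)) (A⁻¹ - (M₀ + V)) ≤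
      c ^ 2 * finnerA A E₀ E₀ := by
    unfold finnerA
    rw [hE]
    exact htr
  have : fnormA A (A⁻¹ - (M₀ + V)) ≤ c * fnormA A E₀ := by
    unfold fnormA
    calc Real.sqrt (finnerA A (A⁻¹ - (M₀ + V)) (A⁻¹ - (M₀ + V)))
        ≤ Real.sqrt (c ^ 2 * finnerA A E₀ E₀) := Real.sqrt_le_sqrt hfin
      _ = c * Real.sqrt (finnerA A E₀ E₀) := by
          rw [Real.sqrt_mul (by positivity), Real.sqrt_sq hc0]
  rw [hE₀] at this
  rw [hc] at this
  exact this
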